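/- For the generalized Gaussian family with β even, the 1-connection coefficient Γ^{(1)}₁₂₁ = E[(∂²_{μσ} l)(∂_μ l)] equals −(1/σ³)·Γ((2β−1)/β)β³/Γ(1/β). -/

import Mathlib

open MeasureTheory

/-- The generalized Gaussian density. -/
noncomputable def genGaussPdf (β : ℕ) (μ σ x : ℝ) : ℝ :=
  (β : ℝ) / (2 * σ * Real.Gamma (1 / (β : ℝ))) * Real.exp (-(x - μ) ^ β / σ ^ β)

/-- The log-likelihood `l = log f`. -/
noncomputable def genGaussLogLik (β : ℕ) (μ σ x : ℝ) : ℝ :=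
  Real.log (genGaussPdf β μ σ x)

lemma gg_loglik_eq (β : ℕ) (hβpos : 0 < β) (s : ℝ) (hs : s ≠ 0) (m x : ℝ) :
    genGaussLogLik β m s x
      = Real.log ((β : ℝ) / (2 * s * Real.Gamma (1 / (β : ℝ)))) - (x - m) ^ β / s ^ β := by
  have hΓ : Real.Gamma (1 / (β : ℝ)) ≠ 0 :=
    (Real.Gamma_pos_of_pos (by positivity)).ne'
  have hc : (β : ℝ) / (2 * s * Real.Gamma (1 / (β : ℝ))) ≠ 0 :=
    div_ne_zero (Nat.cast_ne_zero.mpr hβpos.ne') (by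
      exact mul_ne_zero (mul_ne_zero two_ne_zero hs) hΓ)
  unfold genGaussLogLik genGaussPdf
  rw [Real.log_mul hc (Real.exp_ne_zero _), Real.log_exp]
  ring

lemma gg_hasDerivAt_m (β : ℕ) (hβpos : 0 < β) (s : ℝ) (hs : s ≠ 0) (x μ : ℝ) :
    HasDerivAt (fun m => genGaussLogLik β m s x)
      ((β : ℝ) * (x - μ) ^ (β - 1) / s ^ β) μ := by
  have h : (fun m => genGaussLogLik β m s x)
      = fun m => Real.log ((β : ℝ) / (2 * s * Real.Gamma (1 / (β : ℝ))))
          - (x - m) ^ β / s ^ β := funext fun m => gg_loglik_eq β hβpos s hs m x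
  rw [h]
  have h1 : HasDerivAt (fun m : ℝ => x - m) (-1) μ := (hasDerivAt_id μ).const_sub x
  have h2 := (h1.pow β).div_const (s ^ β)
  have h3 := h2.const_sub (Real.log ((β : ℝ) / (2 * s * Real.Gamma (1 / (β : ℝ)))))
  refine h3.congr_deriv ?_
  ring

lemma gg_deriv_m (β : ℕ) (hβpos : 0 < β) (s : ℝ) (hs : s ≠ 0) (x μ : ℝ) :
    deriv (fun m => genGaussLogLik β m s x) μ = (β : ℝ) * (x - μ) ^ (β - 1) / s ^ β :=
  (gg_hasDerivAt_m β hβpos s hs x μ).deriv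

lemma gg_deriv_sm (β : ℕ) (hβpos : 0 < β) (σ : ℝ) (hσ : 0 < σ) (x μ : ℝ) :
    deriv (fun s => deriv (fun m => genGaussLogLik β m s x) μ) σ
      = -((β : ℝ) ^ 2 * (x - μ) ^ (β - 1) / σ ^ (β + 1)) := by
  have hev : (fun s => deriv (fun m => genGaussLogLik β m s x) μ)
      =ᶠ[nhds σ] (fun s => (β : ℝ) * (x - μ) ^ (β - 1) / s ^ β) := by
    filter_upwards [IsOpen.mem_nhds isOpen_Ioi hσ] with s hs
    exact gg_deriv_m β hβpos s (ne_of_gt hs) x μ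
  rw [hev.deriv_eq]
  have h1 : HasDerivAt (fun s : ℝ => (β : ℝ) * (x - μ) ^ (β - 1) / s ^ β)
      ((0 * σ ^ β - (β : ℝ) * (x - μ) ^ (β - 1) * ((β : ℕ) * σ ^ (β - 1))) / (σ ^ β) ^ 2) σ :=
    (hasDerivAt_const σ _).div (hasDerivAt_pow β σ) (pow_ne_zero _ hσ.ne')
  rw [h1.deriv]
  have hb : (σ ^ β) ^ 2 ≠ 0 := by positivity
  have hσβ1 : σ ^ (β + 1) ≠ 0 := by positivity
  rw [div_eq_iff hb, zero_mul, zero_sub]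
  field_simp
  rw [show (σ ^ β) ^ 2 = σ ^ (β - 1) * σ ^ (β + 1) by
    rw [← pow_mul, ← pow_add]; congr 1; omega]
  ring

theorem generalized_gaussian_Gamma1_121
    (β : ℕ) (hβeven : Even β) (hβpos : 0 < β) (μ σ : ℝ) (hσ : 0 < σ) :
    ∫ x : ℝ, (deriv (fun s => deriv (fun m => genGaussLogLik β m s x) μ) σ)
        * (deriv (fun m => genGaussLogLik β m σ x) μ) * genGaussPdf β μ σ x
      = -((1 / σ ^ 3) * (Real.Gamma ((2 * (β : ℝ) - 1) / (β : ℝ)) * (β : ℝ) ^ 3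
          / Real.Gamma (1 / (β : ℝ)))) := by
  have hΓ : 0 < Real.Gamma (1 / (β : ℝ)) := Real.Gamma_pos_of_pos (by positivity)
  -- pointwise rewrite of the integrand
  have hptw : ∀ x : ℝ, (deriv (fun s => deriv (fun m => genGaussLogLik β m s x) μ) σ)
        * (deriv (fun m => genGaussLogLik β m σ x) μ) * genGaussPdf β μ σ x
      = (-(β : ℝ) ^ 3 / σ ^ (2 * β + 1))
          * ((x - μ) ^ (2 * β - 2) * genGaussPdf β μ σ x) := by
    intro x
    rw [gg_deriv_sm β hβpos σ hσ x μ, gg_deriv_m β hβpos σ hσ.ne' x μ]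
    rw [show 2 * β - 2 = (β - 1) + (β - 1) by omega, pow_add,
      show 2 * β + 1 = (β + 1) + β by omega, pow_add]
    ring
  simp_rw [hptw]
  rw [integral_const_mul]
  -- compute the moment integral
  have hmom : ∫ x : ℝ, (x - μ) ^ (2 * β - 2) * genGaussPdf β μ σ x
      = σ ^ (2 * β - 2) * Real.Gamma ((2 * (β : ℝ) - 1) / (β : ℝ))
          / Real.Gamma (1 / (β : ℝ)) := by
    have h1 : ∀ x : ℝ, (x - μ) ^ (2 * β - 2) * genGaussPdf β μ σ x
        = ((β : ℝ) / (2 * σ * Real.Gamma (1 / (β : ℝ))))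
            * ((fun t : ℝ => t ^ (2 * β - 2) * Real.exp (-t ^ β / σ ^ β)) (x - μ)) := by
      intro x; unfold genGaussPdf; ring
    simp_rw [h1]
    rw [integral_const_mul, integral_sub_right_eq_self
      (fun t : ℝ => t ^ (2 * β - 2) * Real.exp (-t ^ β / σ ^ β)) μ]
    have h2 : (fun t : ℝ => t ^ (2 * β - 2) * Real.exp (-t ^ β / σ ^ β))
        = fun t : ℝ => (fun u : ℝ => u ^ (2 * β - 2) * Real.exp (-u ^ β / σ ^ β)) |t| := by
      funext t
      simp only
      rw [Even.pow_abs (n := 2 * β - 2) ⟨β - 1, by omega⟩, hβeven.pow_abs]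
    rw [h2, integral_comp_abs
      (f := fun u : ℝ => u ^ (2 * β - 2) * Real.exp (-u ^ β / σ ^ β))]
    have h3 : ∫ u in Set.Ioi (0:ℝ), u ^ (2 * β - 2) * Real.exp (-u ^ β / σ ^ β)
        = ∫ u in Set.Ioi (0:ℝ),
            u ^ ((2 * (β:ℝ) - 2)) * Real.exp (-(σ ^ β)⁻¹ * u ^ ((β:ℝ))) := by
      refine setIntegral_congr_fun measurableSet_Ioi (fun u hu => ?_)
      rw [Real.rpow_natCast u β, show ((2 * (β:ℝ) - 2)) = ((2 * β - 2 : ℕ) : ℝ) by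
        push_cast [Nat.cast_sub (by omega : 2 ≤ 2 * β)]; ring,
        Real.rpow_natCast]
      rw [neg_div, div_eq_mul_inv, neg_mul, mul_comm (u ^ β)]
    rw [h3, integral_rpow_mul_exp_neg_mul_rpow (by positivity)
      (by nlinarith [(by exact_mod_cast hβpos : (1:ℝ) ≤ (β:ℝ))]) (by positivity)]
    have h4 : ((σ : ℝ) ^ β)⁻¹ ^ (-(2 * (β:ℝ) - 2 + 1) / (β:ℝ))
        = σ ^ ((2 * β - 2 : ℕ) : ℝ) * σ := by
      rw [← Real.rpow_natCast σ β, ← Real.rpow_neg hσ.le, ← Real.rpow_mul hσ.le,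
        ← Real.rpow_add_one hσ.ne']
      congr 1
      have hβne : (β:ℝ) ≠ 0 := by positivity
      push_cast [Nat.cast_sub (by omega : 2 ≤ 2 * β)]
      field_simp
    rw [h4, Real.rpow_natCast]
    have hq : -(2 * (β:ℝ) - 2 + 1) / (β:ℝ) = -((2 * (β:ℝ) - 1) / (β:ℝ)) := by ring
    have hg : (2 * (β:ℝ) - 2 + 1) / (β:ℝ) = (2 * (β:ℝ) - 1) / (β:ℝ) := by ring
    rw [hg]
    have hβne : (β:ℝ) ≠ 0 := by positivity
    field_simp
  rw [hmom]
  rw [show 2 * β + 1 = (2 * β - 2) + 3 by omega, pow_add]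
  have hσne : σ ≠ 0 := hσ.ne'
  have hp : (σ:ℝ) ^ (2 * β - 2) ≠ 0 := by positivity
  field_simp
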